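/- For every boolean function f, n(f) ≤ (1/2)·4^{C(f)}, where C(f) is the certificate complexity. -/

import Mathlib

open Finset
open scoped Classical

namespace BF

noncomputable section

/-- flip the bits of `x` belonging to `B`. -/
def flipS {n : ℕ} (x : Fin n → Bool) (B : Finset (Fin n)) : Fin n → Bool :=
  fun i => if i ∈ B then !(x i) else x i

/-- flip the `i`-th bit of `x`. -/
def flip1 {n : ℕ} (x : Fin n → Bool) (i : Fin n) : Fin n → Bool :=
  fun j => if j = i then !(x j) else x j

/-- real value of a boolean. -/
def bval (b : Bool) : ℝ := if b then 1 else 0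

/-- coefficient of the monomial `∏_{i ∈ S} x_i` in the unique multilinear
real polynomial expansion of `f` (Möbius inversion over the subcube lattice). -/
def coeffS {n : ℕ} (f : (Fin n → Bool) → ℝ) (S : Finset (Fin n)) : ℝ :=
  ∑ T ∈ S.powerset, (-1 : ℝ) ^ (S.card - T.card) * f (fun i => decide (i ∈ T))

/-- degree of the multilinear expansion of a real-valued function on the cube. -/
def degF {n : ℕ} (f : (Fin n → Bool) → ℝ) : ℕ :=
  (Finset.univ.filter fun S : Finset (Fin n) => coeffS f S ≠ 0).sup Finset.card

/-- degree of a boolean function. -/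
def degB {n : ℕ} (f : (Fin n → Bool) → Bool) : ℕ := degF (fun x => bval (f x))

/-- block sensitivity of `f` at `x`. -/
def bsAt {n : ℕ} (f : (Fin n → Bool) → Bool) (x : Fin n → Bool) : ℕ :=
  (Finset.univ.filter fun 𝓑 : Finset (Finset (Fin n)) =>
      (∀ B ∈ 𝓑, f (flipS x B) ≠ f x) ∧
      ∀ A ∈ 𝓑, ∀ B ∈ 𝓑, A ≠ B → Disjoint A B).sup Finset.card

/-- block sensitivity of `f`. -/
def bs {n : ℕ} (f : (Fin n → Bool) → Bool) : ℕ := Finset.univ.sup (bsAt f)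

/-- sensitivity of `f` at `x`. -/
def sx {n : ℕ} (f : (Fin n → Bool) → Bool) (x : Fin n → Bool) : ℕ :=
  (Finset.univ.filter fun i => f (flip1 x i) ≠ f x).card

/-- (maximum) sensitivity of `f`. -/
def sens {n : ℕ} (f : (Fin n → Bool) → Bool) : ℕ := Finset.univ.sup (sx f)

/-- coordinate `i` is relevant for `f`. -/
def Rel {n : ℕ} (i : Fin n) (f : (Fin n → Bool) → Bool) : Prop :=
  ∃ x, f (flip1 x i) ≠ f x

/-- the set of relevant coordinates of `f`. -/
def relSet {n : ℕ} (f : (Fin n → Bool) → Bool) : Finset (Fin n) :=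
  Finset.univ.filter fun i => Rel i f

/-- the number of relevant variables `n(f)`. -/
def nrel {n : ℕ} (f : (Fin n → Bool) → Bool) : ℕ := (relSet f).card

/-- influence of coordinate `i` on `f` (uniform distribution). -/
def infl {n : ℕ} (f : (Fin n → Bool) → Bool) (i : Fin n) : ℝ :=
  ((Finset.univ.filter fun x : Fin n → Bool => f x ≠ f (flip1 x i)).card : ℝ) / 2 ^ n

/-- total influence `I[f]`. -/
def totalInf {n : ℕ} (f : (Fin n → Bool) → Bool) : ℝ := ∑ i, infl f i

/-- restriction of `f` fixing the coordinates in `H` according to `α`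
(viewed as a function on the full cube not depending on the coordinates in `H`). -/
def restrict {n : ℕ} (f : (Fin n → Bool) → Bool) (H : Finset (Fin n))
    (α : Fin n → Bool) : (Fin n → Bool) → Bool :=
  fun x => f (fun i => if i ∈ H then α i else x i)

/-- certificate complexity of `f` at `x`. -/
def certAt {n : ℕ} (f : (Fin n → Bool) → Bool) (x : Fin n → Bool) : ℕ :=
  sInf {k | ∃ S : Finset (Fin n), S.card = k ∧
    ∀ y, (∀ i ∈ S, y i = x i) → f y = f x}

/-- certificate complexity `C(f)`. -/
def certC {n : ℕ} (f : (Fin n → Bool) → Bool) : ℕ := Finset.univ.sup (certAt f)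

/-- `f` is in standard form: `f(0) = 0` and `f(e_i) = 1` for every basis vector. -/
def stdForm {b : ℕ} (f : (Fin b → Bool) → Bool) : Prop :=
  f (fun _ => false) = false ∧ ∀ i : Fin b, f (fun j => decide (j = i)) = true

end

end BF

open BF


section Aux
open Finset

/-- In a symmetric graph with no periodic non-backtracking walk,
the sum of degrees within any finset is at most twice its size. -/
theorem degsum_le {V : Type*} [Fintype V] [DecidableEq V] (N : V → Finset V)
    (hsym : ∀ y z, z ∈ N y ↔ y ∈ N z)
    (hnb : ∀ (y : ℕ → V) (Λ : ℕ), 0 < Λ → (∀ t, y (t+1) ∈ N (y t)) →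
      (∀ t, y (t+2) ≠ y t) → (∀ t, y (t+Λ) = y t) → False) :
    ∀ W : Finset V, (∑ z ∈ W, (N z ∩ W).card) ≤ 2 * W.card := by
  intro W
  induction W using Finset.strongInductionOn with
  | _ W IH =>
  rcases W.eq_empty_or_nonempty with rfl | ⟨v0, hv0⟩
  · simp
  -- claim: some vertex has degree ≤ 1 in W
  have hleaf : ∃ v ∈ W, (N v ∩ W).card ≤ 1 := by
    by_contra hcon
    push_neg at hcon
    have hdeg : ∀ v ∈ W, 2 ≤ (N v ∩ W).card := fun v hv => hcon v hv
    -- build infinite non-backtracking walk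
    set T := {p : V × V // p.1 ∈ W ∧ p.2 ∈ N p.1 ∩ W} with hT
    have hTne : Nonempty T := by
      have h2 : 0 < (N v0 ∩ W).card := lt_of_lt_of_le (by norm_num) (hdeg v0 hv0)
      obtain ⟨v1, hv1⟩ := Finset.card_pos.mp h2
      exact ⟨⟨(v0, v1), hv0, hv1⟩⟩
    have hstepex : ∀ p : T, ∃ q : T, q.1.1 = p.1.2 ∧ q.1.2 ≠ p.1.1 := by
      rintro ⟨⟨a, b⟩, ha, hb⟩
      have hbW : b ∈ W := (Finset.mem_inter.mp hb).2
      have h2 : 2 ≤ (N b ∩ W).card := hdeg b hbW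
      have hne : ((N b ∩ W).erase a).Nonempty := by
        apply Finset.card_pos.mp
        have := Finset.pred_card_le_card_erase (s := N b ∩ W) (a := a)
        omega
      obtain ⟨c, hc⟩ := hne
      exact ⟨⟨(b, c), hbW, Finset.mem_of_mem_erase hc⟩, rfl,
        Finset.ne_of_mem_erase hc⟩
    choose step hstep1 hstep2 using hstepex
    obtain ⟨p0⟩ := hTne
    set seq : ℕ → T := fun t => Nat.rec p0 (fun _ q => step q) t with hseqdef
    have hseqsucc : ∀ t, seq (t+1) = step (seq t) := fun t => rfl
    have hfin : ∃ a b, a ≠ b ∧ seq a = seq b := Finite.exists_ne_map_eq_of_infinite seq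
    obtain ⟨a, b, hab, heq⟩ := hfin
    wlog hlt : a < b generalizing a b
    · exact this b a (Ne.symm hab) heq.symm (by omega)
    set Λ := b - a with hΛ
    have hΛpos : 0 < Λ := by omega
    set sp : ℕ → T := fun s => seq (a + s % Λ) with hsp
    have hkey : ∀ s, sp (s+1) = step (sp s) := by
      intro s
      have hmod : s % Λ < Λ := Nat.mod_lt _ hΛpos
      rcases Nat.lt_or_ge (s % Λ + 1) Λ with hc | hc
      · have h1Λ : 1 < Λ := by omega
        have hmm : (s+1) % Λ = s % Λ + 1 := by
          rw [Nat.add_mod, Nat.mod_eq_of_lt h1Λ, Nat.mod_eq_of_lt hc]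
        show seq (a + (s+1) % Λ) = step (seq (a + s % Λ))
        rw [hmm, ← Nat.add_assoc]
      · have hwrap : s % Λ + 1 = Λ := by omega
        have h1 : (s+1) % Λ = 0 := by
          rcases Nat.eq_or_lt_of_le (Nat.one_le_iff_ne_zero.mpr (by omega : Λ ≠ 0)) with h | h
          · rw [← h, Nat.mod_one]
          · rw [Nat.add_mod, Nat.mod_eq_of_lt h, hwrap, Nat.mod_self]
        have h2 : seq a = step (seq (a + s % Λ)) := by
          have : b = (a + s % Λ) + 1 := by omega
          rw [heq, this]
        show seq (a + (s+1) % Λ) = step (seq (a + s % Λ))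
        rw [h1, Nat.add_zero]; exact h2
    set y : ℕ → V := fun s => (sp s).1.1 with hy
    have hws : ∀ s, y (s+1) ∈ N (y s) := by
      intro s
      have h1 : y (s+1) = (sp s).1.2 := by
        show (sp (s+1)).1.1 = _
        rw [hkey s]; exact hstep1 _
      rw [h1]
      exact (Finset.mem_inter.mp (sp s).2.2).1
    have hnb2 : ∀ s, y (s+2) ≠ y s := by
      intro s
      have h1 : y (s+2) = (sp (s+1)).1.2 := by
        show (sp (s+2)).1.1 = _
        rw [show s+2 = (s+1)+1 from rfl, hkey (s+1)]; exact hstep1 _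
      rw [h1, hkey s]
      exact hstep2 _
    have hper : ∀ s, y (s + Λ) = y s := by
      intro s; rw [hy]; simp only [hsp, Nat.add_mod_right]
    exact hnb y Λ hΛpos hws hnb2 hper
  obtain ⟨v, hvW, hv1⟩ := hleaf
  set W' := W.erase v with hW'
  have hss : W' ⊂ W := Finset.erase_ssubset hvW
  have IH' := IH W' hss
  have hsplit : (∑ z ∈ W, (N z ∩ W).card) = (N v ∩ W).card + ∑ z ∈ W', (N z ∩ W).card := by
    rw [hW']; exact (Finset.add_sum_erase _ _ hvW).symm
  have hterm : ∀ z ∈ W', (N z ∩ W).card ≤ (N z ∩ W').card + (if v ∈ N z then 1 else 0) := by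
    intro z hz
    by_cases hvz : v ∈ N z
    · have : N z ∩ W ⊆ insert v (N z ∩ W') := by
        intro u hu
        rcases Finset.mem_inter.mp hu with ⟨h1, h2⟩
        by_cases huv : u = v
        · simp [huv]
        · exact Finset.mem_insert_of_mem (Finset.mem_inter.mpr ⟨h1, Finset.mem_erase.mpr ⟨huv, h2⟩⟩)
      calc (N z ∩ W).card ≤ (insert v (N z ∩ W')).card := Finset.card_le_card this
        _ ≤ (N z ∩ W').card + 1 := Finset.card_insert_le _ _
        _ = (N z ∩ W').card + (if v ∈ N z then 1 else 0) := by simp [hvz]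
    · have : N z ∩ W ⊆ N z ∩ W' := by
        intro u hu
        rcases Finset.mem_inter.mp hu with ⟨h1, h2⟩
        refine Finset.mem_inter.mpr ⟨h1, Finset.mem_erase.mpr ⟨?_, h2⟩⟩
        rintro rfl; exact hvz h1
      simpa [hvz] using Finset.card_le_card this
  have hsum2 : (∑ z ∈ W', (N z ∩ W).card) ≤ (∑ z ∈ W', (N z ∩ W').card) + (∑ z ∈ W', if v ∈ N z then 1 else 0) := by
    rw [← Finset.sum_add_distrib]
    exact Finset.sum_le_sum hterm
  have hfilt : (∑ z ∈ W', if v ∈ N z then 1 else 0) ≤ 1 := by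
    have h1 : (∑ z ∈ W', if v ∈ N z then 1 else 0) = (W'.filter (fun z => v ∈ N z)).card := by
      rw [Finset.card_filter]
    rw [h1]
    have h2 : W'.filter (fun z => v ∈ N z) ⊆ N v ∩ W := by
      intro z hz
      rcases Finset.mem_filter.mp hz with ⟨hz1, hz2⟩
      exact Finset.mem_inter.mpr ⟨(hsym v z).mpr hz2, Finset.mem_of_mem_erase hz1⟩
    exact le_trans (Finset.card_le_card h2) hv1
  have hcardW' : W'.card = W.card - 1 := Finset.card_erase_of_mem hvW
  have hWpos : 1 ≤ W.card := Finset.card_pos.mpr ⟨v0, hv0⟩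
  omega


lemma card_subcube {n : ℕ} (U : Finset (Fin n)) (x : Fin n → Bool) :
    (Finset.univ.filter fun y : Fin n → Bool => ∀ j ∈ U, y j = x j).card = 2 ^ (n - U.card) := by
  have e : {y : Fin n → Bool // ∀ j ∈ U, y j = x j} ≃ ({j : Fin n // j ∉ U} → Bool) :=
    { toFun := fun y j => y.1 j.1
      invFun := fun g => ⟨fun j => if h : j ∈ U then x j else g ⟨j, h⟩, by
        intro j hj; simp [hj]⟩
      left_inv := by
        rintro ⟨y, hy⟩
        ext j
        by_cases h : j ∈ U
        · simp [h, hy j h]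
        · simp [h]
      right_inv := by
        intro g
        funext j
        simp [j.2] }
  have h1 : (Finset.univ.filter fun y : Fin n → Bool => ∀ j ∈ U, y j = x j).card
      = Fintype.card {y : Fin n → Bool // ∀ j ∈ U, y j = x j} := by
    rw [Fintype.card_subtype]
  rw [h1, Fintype.card_congr e, Fintype.card_fun]
  have h2 : Fintype.card {j : Fin n // j ∉ U} = n - U.card := by
    rw [Fintype.card_subtype]
    have h3 : Finset.univ.filter (fun j : Fin n => j ∉ U) = Finset.univ \ U := by
      ext j; simp
    rw [h3, Finset.card_sdiff_of_subset (Finset.subset_univ _)]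
    simp
  rw [h2]
  simp

lemma flip1_flip1 {n : ℕ} (x : Fin n → Bool) (i : Fin n) :
    BF.flip1 (BF.flip1 x i) i = x := by
  funext j
  simp only [BF.flip1]
  by_cases h : j = i <;> simp [h]

lemma no_periodic_walk {n : ℕ} (f : (Fin n → Bool) → Bool) (R : Finset (Fin n))
    (U : Fin n → Finset (Fin n)) (pt : Fin n → (Fin n → Bool))
    (hU : ∀ i ∈ R, i ∉ U i)
    (hP : ∀ i ∈ R, ∀ y, (∀ j ∈ U i, y j = pt i j) → (f y = f (pt i) ↔ y i = pt i i))
    (y : ℕ → (Fin n → Bool)) (Λ : ℕ) (hΛ : 0 < Λ)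
    (hstep : ∀ t, ∃ i, i ∈ R ∧ (∀ j ∈ U i, y t j = pt i j) ∧ y (t+1) = BF.flip1 (y t) i)
    (hnb : ∀ t, y (t+2) ≠ y t)
    (hper : ∀ t, y (t+Λ) = y t) : False := by
  choose d hdR hdA hdflip using hstep
  -- basic flip facts
  have hflip : ∀ t j, y (t+1) j = if j = d t then !(y t j) else y t j := by
    intro t j; rw [hdflip t]; rfl
  -- consecutive directions differ
  have hdd : ∀ t, d (t+1) ≠ d t := by
    intro t h
    apply hnb t
    have : y (t+2) = BF.flip1 (BF.flip1 (y t) (d t)) (d t) := by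
      rw [show t+2 = (t+1)+1 from rfl, hdflip (t+1), h, hdflip t]
    rw [this, flip1_flip1]
  -- parity of coordinate values along the walk
  have hpar : ∀ j a k, (y (a+k) j = y a j) ↔
      Even (((Finset.Ico a (a+k)).filter (fun t => d t = j)).card) := by
    intro j a k
    induction k with
    | zero => simp
    | succ k IHk =>
      have hins : Finset.Ico a (a+(k+1)) = insert (a+k) (Finset.Ico a (a+k)) := by
        ext t; simp only [Finset.mem_Ico, Finset.mem_insert]; omega
      have hnotmem : a + k ∉ (Finset.Ico a (a+k)).filter (fun t => d t = j) := by
        simp [Finset.mem_filter]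
      rw [hins]
      by_cases hdk : d (a+k) = j
      · have hcard : ((insert (a+k) (Finset.Ico a (a+k))).filter (fun t => d t = j)).card
            = ((Finset.Ico a (a+k)).filter (fun t => d t = j)).card + 1 := by
          rw [Finset.filter_insert, if_pos hdk, Finset.card_insert_of_notMem hnotmem]
        rw [hcard]
        have hval : y (a+(k+1)) j = !(y (a+k) j) := by
          rw [show a+(k+1) = (a+k)+1 from by omega, hflip (a+k), if_pos hdk.symm]
        rw [hval, Nat.even_add_one, ← IHk]
        rcases Bool.eq_false_or_eq_true (y (a+k) j) with h | h <;>
          rcases Bool.eq_false_or_eq_true (y a j) with h2 | h2 <;> simp [h, h2]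
      · have hcard : ((insert (a+k) (Finset.Ico a (a+k))).filter (fun t => d t = j)).card
            = ((Finset.Ico a (a+k)).filter (fun t => d t = j)).card := by
          rw [Finset.filter_insert, if_neg hdk]
        rw [hcard]
        have hval : y (a+(k+1)) j = y (a+k) j := by
          rw [show a+(k+1) = (a+k)+1 from by omega, hflip (a+k),
            if_neg (fun h => hdk h.symm)]
        rw [hval, IHk]
  -- every direction is used again
  have hnext : ∀ a, ∃ t, a < t ∧ d t = d a := by
    intro a
    have heven : Even (((Finset.Ico a (a+Λ)).filter (fun t => d t = d a)).card) := by
      rw [← hpar (d a) a Λ, hper a]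
    have hmem : a ∈ (Finset.Ico a (a+Λ)).filter (fun t => d t = d a) := by
      simp [Finset.mem_Ico, hΛ]
    have hone : 1 < ((Finset.Ico a (a+Λ)).filter (fun t => d t = d a)).card := by
      have hpos : 0 < ((Finset.Ico a (a+Λ)).filter (fun t => d t = d a)).card :=
        Finset.card_pos.mpr ⟨a, hmem⟩
      obtain ⟨r, hr⟩ := heven
      omega
    obtain ⟨u, hu, v, hv, huv⟩ := Finset.one_lt_card.mp hone
    rcases eq_or_ne u a with rfl | hua
    · refine ⟨v, ?_, (Finset.mem_filter.mp hv).2⟩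
      have := (Finset.mem_Ico.mp (Finset.mem_filter.mp hv).1).1
      omega
    · refine ⟨u, ?_, (Finset.mem_filter.mp hu).2⟩
      have := (Finset.mem_Ico.mp (Finset.mem_filter.mp hu).1).1
      omega
  -- the next-use function and its gap
  set nxt : ℕ → ℕ := fun a => Nat.find (hnext a) with hnxt
  have hnxt_spec : ∀ a, a < nxt a ∧ d (nxt a) = d a := fun a => Nat.find_spec (hnext a)
  have hnxt_min : ∀ a t, a < t → d t = d a → nxt a ≤ t := by
    intro a t h1 h2; exact Nat.find_min' (hnext a) ⟨h1, h2⟩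
  have hgap2 : ∀ a, a + 2 ≤ nxt a := by
    intro a
    have h1 := (hnxt_spec a).1
    have h2 : nxt a ≠ a + 1 := by
      intro h
      exact hdd a (by rw [← h]; exact (hnxt_spec a).2)
    omega
  -- minimal gap
  obtain ⟨a, ha⟩ := Nat.sInf_mem (Set.range_nonempty (fun a => nxt a - a))
  set m := sInf (Set.range (fun a => nxt a - a)) with hm
  set b := nxt a with hb
  set i := d a with hi
  have hmle : ∀ c, m ≤ nxt c - c := fun c => Nat.sInf_le ⟨c, rfl⟩
  -- memberships
  have hyA : ∀ t, ∀ j ∈ U (d t), y t j = pt (d t) j := hdA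
  have hia : i ∉ U i := hU i (hdR a)
  have hw1A : ∀ j ∈ U i, y (a+1) j = pt i j := by
    intro j hj
    have hji : j ≠ i := fun h => hia (h ▸ hj)
    rw [hflip a, if_neg hji]
    exact hyA a j hj
  have hybA : ∀ j ∈ U i, y b j = pt i j := by
    intro j hj
    have := hyA b
    rw [(hnxt_spec a).2] at this
    exact this j hj
  set d1 := d (a+1) with hd1
  have hd1i : d1 ≠ i := hdd a
  have hw1A1 : ∀ j ∈ U d1, y (a+1) j = pt d1 j := hyA (a+1)
  -- cross lemma : d1 ∈ U i
  have hcross : d1 ∈ U i := by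
    by_contra hcon
    set w := y (a+1) with hwdef
    set z := BF.flip1 w d1 with hzdef
    have hzA : ∀ j ∈ U i, z j = pt i j := by
      intro j hj
      have hjd1 : j ≠ d1 := fun h => hcon (h ▸ hj)
      rw [hzdef]; show (if j = d1 then !(w j) else w j) = pt i j
      rw [if_neg hjd1]; exact hw1A j hj
    have hzi : z i = w i := by
      rw [hzdef]; show (if i = d1 then !(w i) else w i) = w i
      rw [if_neg (fun h => hd1i h.symm)]
    have hzA1 : ∀ j ∈ U d1, z j = pt d1 j := by
      intro j hj
      have hjd1 : j ≠ d1 := fun h => (hU d1 (hdR (a+1))) (h ▸ hj)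
      rw [hzdef]; show (if j = d1 then !(w j) else w j) = pt d1 j
      rw [if_neg hjd1]; exact hw1A1 j hj
    have hzd1 : z d1 = !(w d1) := by
      rw [hzdef]; show (if d1 = d1 then !(w d1) else w d1) = !(w d1)
      rw [if_pos rfl]
    have e1 := hP i (hdR a) w hw1A
    have e2 := hP i (hdR a) z hzA
    have e3 := hP d1 (hdR (a+1)) w hw1A1
    have e4 := hP d1 (hdR (a+1)) z hzA1
    rw [hzi] at e2
    -- f w = f z from e1, e2 ; contradiction with e3, e4, hzd1
    rw [hzd1] at e4
    revert e1 e2 e3 e4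
    rcases Bool.eq_false_or_eq_true (f w) with h1 | h1 <;>
      rcases Bool.eq_false_or_eq_true (f z) with h2 | h2 <;>
      rcases Bool.eq_false_or_eq_true (f (pt i)) with h3 | h3 <;>
      rcases Bool.eq_false_or_eq_true (f (pt d1)) with h4 | h4 <;>
      rcases Bool.eq_false_or_eq_true (w i) with h5 | h5 <;>
      rcases Bool.eq_false_or_eq_true (pt i i) with h6 | h6 <;>
      rcases Bool.eq_false_or_eq_true (w d1) with h7 | h7 <;>
      rcases Bool.eq_false_or_eq_true (pt d1 d1) with h8 | h8 <;>
      simp [h1, h2, h3, h4, h5, h6, h7, h8]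
  -- coordinate d1 agrees at times a+1 and b
  have hagree : y b d1 = y (a+1) d1 := by
    rw [hybA d1 hcross, hw1A d1 hcross]
  -- parity gives a second use of d1 in (a+1, b)
  have hb2 : a + 2 ≤ b := hgap2 a
  have heven : Even (((Finset.Ico (a+1) b).filter (fun t => d t = d1)).card) := by
    have := hpar d1 (a+1) (b - (a+1))
    rw [show a+1+(b-(a+1)) = b from by omega] at this
    exact this.mp hagree
  have hmem : a+1 ∈ (Finset.Ico (a+1) b).filter (fun t => d t = d1) := by
    simp [Finset.mem_Ico]
    omega
  have hone : 1 < ((Finset.Ico (a+1) b).filter (fun t => d t = d1)).card := by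
    have hpos : 0 < _ := Finset.card_pos.mpr ⟨a+1, hmem⟩
    obtain ⟨r, hr⟩ := heven
    omega
  obtain ⟨u, hu, v, hv, huv⟩ := Finset.one_lt_card.mp hone
  have hgetc : ∃ c, a+1 < c ∧ c < b ∧ d c = d1 := by
    rcases eq_or_ne u (a+1) with rfl | hua
    · obtain ⟨hv1, hv2⟩ := Finset.mem_filter.mp hv
      obtain ⟨hv3, hv4⟩ := Finset.mem_Ico.mp hv1
      exact ⟨v, by omega, hv4, hv2⟩
    · obtain ⟨hu1, hu2⟩ := Finset.mem_filter.mp hu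
      obtain ⟨hu3, hu4⟩ := Finset.mem_Ico.mp hu1
      exact ⟨u, by omega, hu4, hu2⟩
  obtain ⟨c, hc1, hc2, hc3⟩ := hgetc
  have hlt : nxt (a+1) ≤ c := hnxt_min (a+1) c hc1 hc3
  have hm1 := hmle (a+1)
  have hma : m = nxt a - a := by rw [← ha]
  omega

/-- The structured family bound: sum of subcube sizes is at most `2^(n+1)`. -/
lemma family_bound {n : ℕ} (f : (Fin n → Bool) → Bool) (R : Finset (Fin n))
    (U : Fin n → Finset (Fin n)) (pt : Fin n → (Fin n → Bool))
    (hU : ∀ i ∈ R, i ∉ U i)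
    (hP : ∀ i ∈ R, ∀ y, (∀ j ∈ U i, y j = pt i j) → (f y = f (pt i) ↔ y i = pt i i)) :
    ∑ i ∈ R, (Finset.univ.filter fun y : Fin n → Bool => ∀ j ∈ U i, y j = pt i j).card
      ≤ 2 ^ (n + 1) := by
  classical
  have hagree : ∀ (y : Fin n → Bool) (i j : Fin n), j ≠ i → BF.flip1 y i j = y j := by
    intro y i j h; simp [BF.flip1, h]
  set D : (Fin n → Bool) → Finset (Fin n) :=
    fun y => R.filter (fun i => ∀ j ∈ U i, y j = pt i j) with hD
  set N : (Fin n → Bool) → Finset (Fin n → Bool) :=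
    fun y => (D y).image (BF.flip1 y) with hN
  have hDmem : ∀ y i, i ∈ D y ↔ (i ∈ R ∧ ∀ j ∈ U i, y j = pt i j) := by
    intro y i; simp [hD]
  have hNmem : ∀ y z, z ∈ N y ↔ ∃ i, i ∈ D y ∧ BF.flip1 y i = z := by
    intro y z; simp [hN]
  have hflipD : ∀ (y : Fin n → Bool) (i : Fin n), i ∈ D y → i ∈ D (BF.flip1 y i) := by
    intro y i hi
    obtain ⟨hiR, hcond⟩ := (hDmem y i).mp hi
    refine (hDmem _ i).mpr ⟨hiR, ?_⟩
    intro j hj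
    have hji : j ≠ i := fun h => (hU i hiR) (h ▸ hj)
    rw [hagree y i j hji]
    exact hcond j hj
  have hsym1 : ∀ y z, z ∈ N y → y ∈ N z := by
    intro y z hz
    obtain ⟨i, hiD, hflip⟩ := (hNmem y z).mp hz
    refine (hNmem z y).mpr ⟨i, ?_, ?_⟩
    · rw [← hflip]; exact hflipD y i hiD
    · rw [← hflip, flip1_flip1]
  have hsym : ∀ y z, z ∈ N y ↔ y ∈ N z := fun y z => ⟨hsym1 y z, hsym1 z y⟩
  have hnbwalk : ∀ (y : ℕ → (Fin n → Bool)) (Λ : ℕ), 0 < Λ →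
      (∀ t, y (t+1) ∈ N (y t)) → (∀ t, y (t+2) ≠ y t) → (∀ t, y (t+Λ) = y t) → False := by
    intro y Λ hΛ hws hnb2 hper
    refine no_periodic_walk f R U pt hU hP y Λ hΛ ?_ hnb2 hper
    intro t
    obtain ⟨i, hiD, hflip⟩ := (hNmem (y t) (y (t+1))).mp (hws t)
    obtain ⟨hiR, hcond⟩ := (hDmem (y t) i).mp hiD
    exact ⟨i, hiR, hcond, hflip.symm⟩
  have hmain := degsum_le N hsym hnbwalk Finset.univ
  have hcardN : ∀ z, (N z ∩ Finset.univ).card = (D z).card := by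
    intro z
    rw [Finset.inter_univ, hN]
    apply Finset.card_image_of_injOn
    intro u hu v hv huv
    by_contra hne
    have := congrFun huv u
    rw [hagree z v u hne] at this
    simp [BF.flip1] at this
  have hswap : ∑ i ∈ R, (Finset.univ.filter fun y : Fin n → Bool => ∀ j ∈ U i, y j = pt i j).card
      = ∑ z : Fin n → Bool, (D z).card := by
    simp only [Finset.card_filter, hD]
    rw [Finset.sum_comm]
  have huniv : (Finset.univ : Finset (Fin n → Bool)).card = 2 ^ n := by
    rw [Finset.card_univ]
    simp [Fintype.card_fun]
  calc ∑ i ∈ R, (Finset.univ.filter fun y : Fin n → Bool => ∀ j ∈ U i, y j = pt i j).card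
      = ∑ z : Fin n → Bool, (D z).card := hswap
    _ = ∑ z : Fin n → Bool, (N z ∩ Finset.univ).card := by
        refine Finset.sum_congr rfl fun z _ => (hcardN z).symm
    _ ≤ 2 * (Finset.univ : Finset (Fin n → Bool)).card := hmain
    _ = 2 ^ (n + 1) := by rw [huniv]; ring

/-- Extraction of the dictator subcube from certificates. -/
lemma extract {n : ℕ} (f : (Fin n → Bool) → Bool) (i : Fin n) (hi : BF.Rel i f) :
    ∃ (Ui : Finset (Fin n)) (xi : Fin n → Bool), i ∉ Ui ∧ Ui.card + 2 ≤ 2 * BF.certC f ∧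
      ∀ y, (∀ j ∈ Ui, y j = xi j) → (f y = f xi ↔ y i = xi i) := by
  classical
  obtain ⟨x, hx⟩ := hi
  -- get a minimal certificate at any point
  have hcert : ∀ z : Fin n → Bool, ∃ S : Finset (Fin n), S.card ≤ BF.certC f ∧
      ∀ y, (∀ j ∈ S, y j = z j) → f y = f z := by
    intro z
    have hne : {k | ∃ S : Finset (Fin n), S.card = k ∧
        ∀ y, (∀ j ∈ S, y j = z j) → f y = f z}.Nonempty := by
      refine ⟨n, Finset.univ, by simp, ?_⟩
      intro y hy
      have : y = z := funext fun j => hy j (Finset.mem_univ j)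
      rw [this]
    obtain ⟨S, hScard, hScert⟩ := Nat.sInf_mem hne
    refine ⟨S, ?_, hScert⟩
    rw [hScard]
    exact Finset.le_sup (f := BF.certAt f) (Finset.mem_univ z)
  obtain ⟨S, hScard, hScert⟩ := hcert x
  obtain ⟨T, hTcard, hTcert⟩ := hcert (BF.flip1 x i)
  have hagree : ∀ (y : Fin n → Bool) (j : Fin n), j ≠ i → BF.flip1 y i j = y j := by
    intro y j h; simp [BF.flip1, h]
  have hx'i : BF.flip1 x i i = !(x i) := by simp [BF.flip1]
  -- i belongs to both certificates
  have hiS : i ∈ S := by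
    by_contra hcon
    apply hx
    apply hScert
    intro j hj
    exact hagree x j (fun h => hcon (h ▸ hj))
  have hiT : i ∈ T := by
    by_contra hcon
    apply hx
    have : f x = f (BF.flip1 x i) := by
      apply hTcert
      intro j hj
      have hji : j ≠ i := fun h => hcon (h ▸ hj)
      exact (hagree x j hji).symm
    rw [this]
  refine ⟨(S ∪ T).erase i, x, Finset.notMem_erase i _, ?_, ?_⟩
  · -- cardinality bound
    have h1 : ((S ∪ T).erase i).card + 1 = (S ∪ T).card :=
      Finset.card_erase_add_one (Finset.mem_union_left T hiS)
    have h2 : S ∪ T = S ∪ T.erase i := by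
      ext j
      simp only [Finset.mem_union, Finset.mem_erase]
      constructor
      · rintro (h | h)
        · exact Or.inl h
        · rcases eq_or_ne j i with rfl | hji
          · exact Or.inl hiS
          · exact Or.inr ⟨hji, h⟩
      · rintro (h | ⟨_, h⟩)
        · exact Or.inl h
        · exact Or.inr h
    have h3 : (S ∪ T.erase i).card ≤ S.card + (T.erase i).card := Finset.card_union_le _ _
    have h4 : (T.erase i).card + 1 = T.card := Finset.card_erase_add_one hiT
    have h5 : (S ∪ T).card = (S ∪ T.erase i).card := by rw [← h2]
    omega
  · -- the dictator property
    intro y hy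
    by_cases hyi : y i = x i
    · have hfy : f y = f x := by
        apply hScert
        intro j hj
        rcases eq_or_ne j i with rfl | hji
        · exact hyi
        · exact hy j (Finset.mem_erase.mpr ⟨hji, Finset.mem_union_left T hj⟩)
      simp [hfy, hyi]
    · have hyi' : y i = BF.flip1 x i i := by
        rw [hx'i]
        rcases Bool.eq_false_or_eq_true (y i) with h | h <;>
          rcases Bool.eq_false_or_eq_true (x i) with h2 | h2 <;>
          simp_all
      have hfy : f y = f (BF.flip1 x i) := by
        apply hTcert
        intro j hj
        rcases eq_or_ne j i with rfl | hji
        · exact hyi'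
        · rw [hagree x j hji]
          exact hy j (Finset.mem_erase.mpr ⟨hji, Finset.mem_union_right S hj⟩)
      rw [hfy]
      simp only [hyi, iff_false]
      exact hx

end Aux

/-- `n(f) ≤ (1/2)·4^{C(f)}`. -/
theorem stmt16 {n : ℕ} (f : (Fin n → Bool) → Bool) :
    (nrel f : ℝ) ≤ 1 / 2 * (4 : ℝ) ^ certC f := by
  classical
  set R := relSet f with hR
  set C := certC f with hC
  clear_value C
  rcases R.eq_empty_or_nonempty with hemp | ⟨i0, hi0⟩
  · have : nrel f = 0 := by rw [show nrel f = R.card from rfl, hemp, Finset.card_empty]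
    rw [this]
    push_cast
    positivity
  · -- extract data for every relevant coordinate
    have hrel : ∀ i ∈ R, BF.Rel i f := by
      intro i hi
      rw [hR, BF.relSet] at hi
      exact (Finset.mem_filter.mp hi).2
    have hex : ∀ i, i ∈ R → ∃ (Ui : Finset (Fin n)) (xi : Fin n → Bool),
        i ∉ Ui ∧ Ui.card + 2 ≤ 2 * C ∧
        ∀ y, (∀ j ∈ Ui, y j = xi j) → (f y = f xi ↔ y i = xi i) :=
      fun i hi => hC ▸ extract f i (hrel i hi)
    choose! U pt hU1 hcard hP using hex
    have hCpos : 1 ≤ C := by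
      have := hcard i0 hi0
      omega
    set M := 2 * C - 2 with hM
    clear_value M
    have hUM : ∀ i ∈ R, (U i).card ≤ M := by
      intro i hi
      have := hcard i hi
      omega
    have hexp : M ≤ n → M + 1 + (n - M) = n + 1 := by intro h; omega
    have hexp2 : 2 * C = M + 2 := by omega
    have hsum := family_bound f R U pt hU1 hP
    -- lower bound each subcube
    have hlow : ∀ i ∈ R, 2 ^ (n - M) ≤
        (Finset.univ.filter fun y : Fin n → Bool => ∀ j ∈ U i, y j = pt i j).card := by
      intro i hi
      rw [card_subcube]
      exact Nat.pow_le_pow_right (by norm_num) (Nat.sub_le_sub_left (hUM i hi) n)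
    have hRsum : R.card * 2 ^ (n - M) ≤ 2 ^ (n + 1) := by
      calc R.card * 2 ^ (n - M) = ∑ _i ∈ R, 2 ^ (n - M) := by
            rw [Finset.sum_const, smul_eq_mul]
        _ ≤ ∑ i ∈ R, (Finset.univ.filter fun y : Fin n → Bool =>
              ∀ j ∈ U i, y j = pt i j).card := Finset.sum_le_sum hlow
        _ ≤ 2 ^ (n + 1) := hsum
    -- conclude R.card ≤ 2 ^ (M + 1)
    have hfinal : R.card ≤ 2 ^ (M + 1) := by
      rcases le_or_gt M n with hMn | hMn
      · have hsplit : (2:ℕ) ^ (n + 1) = 2 ^ (M + 1) * 2 ^ (n - M) := by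
          rw [← pow_add, hexp hMn]
        rw [hsplit] at hRsum
        exact Nat.le_of_mul_le_mul_right hRsum (Nat.pow_pos (by norm_num))
      · have h1 : R.card ≤ n := by
          have := Finset.card_le_univ R
          simpa using this
        have h2 : n < 2 ^ n := Nat.lt_two_pow_self
        have h3 : (2:ℕ) ^ n ≤ 2 ^ (M + 1) := Nat.pow_le_pow_right (by norm_num) (le_of_lt (lt_trans hMn (Nat.lt_succ_self M)))
        exact le_trans h1 (le_trans (le_of_lt h2) h3)
    -- real arithmetic
    have hcast : (nrel f : ℝ) ≤ (2 : ℝ) ^ (M + 1) := by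
      rw [show nrel f = R.card from rfl]
      calc (R.card : ℝ) ≤ ((2 ^ (M+1) : ℕ) : ℝ) := by exact_mod_cast hfinal
        _ = (2 : ℝ) ^ (M + 1) := by push_cast; ring
    have h4C : (4 : ℝ) ^ C = 2 ^ (M + 2) := by
      rw [show (4:ℝ) = 2^2 by norm_num, ← pow_mul, hexp2]
    calc (nrel f : ℝ) ≤ (2 : ℝ) ^ (M + 1) := hcast
      _ = 1 / 2 * (2 : ℝ) ^ (M + 2) := by rw [pow_succ]; ring
      _ = 1 / 2 * (4 : ℝ) ^ C := by rw [h4C]
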